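/- A probability distribution p on X^{k+1} (X a finite alphabet) is the (k+1)-th order marginal of some stationary process if and only if it satisfies the stationarity condition: Σ_{β ∈ X} p(β x^k) = Σ_{β ∈ X} p(x^k β) for all x^k ∈ X^k, i.e., the marginal of p on the first k coordinates equals the marginal on the last k coordinates. -/

import Mathlib

open MeasureTheory Set

noncomputable section StationaryAux

namespace StationaryAux

local instance : Fact ((0:ℝ) < 1) := ⟨zero_lt_one⟩

abbrev C : Type := AddCircle (1:ℝ)

/-! ### Sampling from a finite distribution using a uniform point on the circle -/

noncomputable def val (u : C) : ℝ := (AddCircle.equivIco 1 0 u : ℝ)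

lemma val_mk (x : ℝ) : val (x : C) = Int.fract x := by
  simp [val, AddCircle.coe_equivIco_mk_apply]

lemma val_mem (u : C) : val u ∈ Ico (0:ℝ) 1 := by
  have h := (AddCircle.equivIco 1 0 u).2
  simpa [val] using h

lemma measurable_val : Measurable val := by
  apply QuotientAddGroup.measurable_from_quotient.mpr
  have : (val ∘ (QuotientAddGroup.mk : ℝ → C)) = Int.fract := by
    funext x; exact val_mk x
  rw [this]
  exact measurable_fract

lemma volume_val_Ico {a b : ℝ} (h0 : 0 ≤ a) (hb : b ≤ 1) :
    volume (val ⁻¹' Ico a b) = ENNReal.ofReal (b - a) := by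
  have hmeas : MeasurableSet (val ⁻¹' Ico a b) := measurable_val measurableSet_Ico
  have key := AddCircle.add_projection_respects_measure (T := 1) 0 hmeas
  rw [key]
  have hsub1 : Ioo a b ⊆ (QuotientAddGroup.mk ⁻¹' (val ⁻¹' Ico a b) ∩ Ioc 0 (0+1)) := by
    intro x hx
    constructor
    · show val (x : C) ∈ Ico a b
      rw [val_mk, Int.fract_eq_self.mpr ⟨le_trans h0 hx.1.le, lt_of_lt_of_le hx.2 hb⟩]
      exact ⟨hx.1.le, hx.2⟩
    · exact ⟨lt_of_le_of_lt h0 hx.1, by simpa using le_trans hx.2.le hb⟩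
  have hsub2 : (QuotientAddGroup.mk ⁻¹' (val ⁻¹' Ico a b) ∩ Ioc 0 (0+1)) ⊆ Ico a b ∪ {1} := by
    rintro x ⟨hx1, hx2, hx3⟩
    rw [zero_add] at hx3
    rcases eq_or_lt_of_le hx3 with h1 | h1
    · right; exact h1.symm ▸ rfl
    · left
      have : val (x : C) ∈ Ico a b := hx1
      rwa [val_mk, Int.fract_eq_self.mpr ⟨hx2.le, h1⟩] at this
  refine le_antisymm ?_ ?_
  · calc volume (QuotientAddGroup.mk ⁻¹' (val ⁻¹' Ico a b) ∩ Ioc 0 (0+1))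
        ≤ volume (Ico a b ∪ {1}) := measure_mono hsub2
      _ ≤ volume (Ico a b) + volume ({1} : Set ℝ) := measure_union_le _ _
      _ = ENNReal.ofReal (b - a) := by simp [Real.volume_Ico, Real.volume_singleton]
  · calc ENNReal.ofReal (b - a) = volume (Ioo a b) := by simp [Real.volume_Ioo]
      _ ≤ _ := measure_mono hsub1

section Samp

variable {Y : Type*} [Fintype Y] [Nonempty Y]

noncomputable def cum (f : Y → ℝ) (n : ℕ) : ℝ :=
  ∑ j ∈ Finset.range n, if h : j < Fintype.card Y then f ((Fintype.equivFin Y).symm ⟨j, h⟩) else 0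

noncomputable def samp (f : Y → ℝ) (u : C) : Y :=
  if h : ∃ y, val u ∈ Ico (cum f (Fintype.equivFin Y y))
      (cum f (Fintype.equivFin Y y) + f y) then h.choose else Classical.arbitrary Y

variable {f : Y → ℝ} (hf0 : ∀ y, 0 ≤ f y)

include hf0

omit [Nonempty Y] in
lemma cum_mono : Monotone (cum f) := by
  intro n m hnm
  apply Finset.sum_le_sum_of_subset_of_nonneg (Finset.range_subset_range.mpr hnm)
  intro j _ _
  by_cases h : j < Fintype.card Y
  · simp only [dif_pos h]; exact hf0 _
  · simp [dif_neg h]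

omit [Nonempty Y] hf0 in
lemma cum_succ (y : Y) :
    cum f ((Fintype.equivFin Y y : ℕ) + 1) = cum f (Fintype.equivFin Y y) + f y := by
  rw [cum, Finset.sum_range_succ, dif_pos (Fintype.equivFin Y y).2]
  simp only [Fin.eta, Equiv.symm_apply_apply]
  rfl

variable (hf1 : ∑ y, f y = 1)
include hf1

omit [Nonempty Y] hf0 in
lemma cum_card : cum f (Fintype.card Y) = 1 := by
  rw [cum, ← Fin.sum_univ_eq_sum_range]
  rw [← hf1]
  rw [← Equiv.sum_comp (Fintype.equivFin Y).symm f]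
  apply Finset.sum_congr rfl
  intro j _
  rw [dif_pos j.2, Fin.eta]

lemma exists_unique_interval {t : ℝ} (ht : t ∈ Ico (0:ℝ) 1) :
    ∃! y : Y, t ∈ Ico (cum f (Fintype.equivFin Y y)) (cum f (Fintype.equivFin Y y) + f y) := by
  set e := Fintype.equivFin Y
  have hdisj : ∀ y z : Y, (e y : ℕ) < e z →
      t < cum f (e y) + f y → cum f (e z) ≤ t → False := by
    intro y z hyz h1 h2
    have : cum f ((e y : ℕ) + 1) ≤ cum f (e z) := cum_mono hf0 hyz
    rw [cum_succ y] at this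
    linarith
  have hex : ∃ y : Y, t ∈ Ico (cum f (e y)) (cum f (e y) + f y) := by
    classical
    set F := Finset.univ.filter (fun y : Y => cum f (e y) ≤ t) with hF
    have hFne : F.Nonempty := by
      refine ⟨e.symm 0, ?_⟩
      simp only [hF, Finset.mem_filter, Finset.mem_univ, true_and]
      have : ((e (e.symm 0)) : ℕ) = 0 := by rw [Equiv.apply_symm_apply]; simp
      rw [this]
      simpa [cum] using ht.1
    obtain ⟨y, hyF, hymax⟩ := F.exists_max_image (fun y => (e y : ℕ)) hFne
    have hy1 : cum f (e y) ≤ t := by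
      simpa [hF] using hyF
    refine ⟨y, hy1, ?_⟩
    by_contra hcon
    push_neg at hcon
    rw [← cum_succ y] at hcon
    by_cases hN : (e y : ℕ) + 1 < Fintype.card Y
    · set z := e.symm ⟨(e y : ℕ) + 1, hN⟩ with hz
      have hez : (e z : ℕ) = (e y : ℕ) + 1 := by rw [hz, Equiv.apply_symm_apply]
      have hzF : z ∈ F := by
        simp only [hF, Finset.mem_filter, Finset.mem_univ, true_and]
        rw [hez]; exact hcon
      have := hymax z hzF
      omega
    · have hNe : (e y : ℕ) + 1 = Fintype.card Y := by
        have := (e y).2; omega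
      rw [hNe, cum_card hf1] at hcon
      exact absurd hcon (not_le.mpr ht.2)
  obtain ⟨y, hy⟩ := hex
  refine ⟨y, hy, ?_⟩
  intro z hz
  rcases lt_trichotomy ((e z : ℕ)) ((e y : ℕ)) with h | h | h
  · exact absurd (hdisj z y h hz.2 hy.1) not_false
  · exact e.injective (Fin.ext h)
  · exact absurd (hdisj y z h hy.2 hz.1) not_false

lemma samp_preimage (y : Y) :
    samp f ⁻¹' {y} = val ⁻¹' Ico (cum f (Fintype.equivFin Y y))
      (cum f (Fintype.equivFin Y y) + f y) := by
  ext u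
  have hEU := exists_unique_interval hf0 hf1 (val_mem u)
  simp only [mem_preimage, mem_singleton_iff, samp]
  have hex : ∃ z : Y, val u ∈ Ico (cum f (Fintype.equivFin Y z))
      (cum f (Fintype.equivFin Y z) + f z) := hEU.exists
  rw [dif_pos hex]
  constructor
  · rintro rfl
    exact hex.choose_spec
  · intro hy
    exact hEU.unique hex.choose_spec hy

lemma samp_measurable [MeasurableSpace Y] [MeasurableSingletonClass Y] :
    Measurable (samp f) := by
  apply measurable_to_countable'
  intro y
  rw [samp_preimage hf0 hf1]
  exact measurable_val measurableSet_Ico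

lemma samp_volume (y : Y) :
    volume (samp f ⁻¹' {y}) = ENNReal.ofReal (f y) := by
  rw [samp_preimage hf0 hf1]
  have h0 : (0:ℝ) ≤ cum f (Fintype.equivFin Y y) := by
    have := cum_mono hf0 (Nat.zero_le (Fintype.equivFin Y y : ℕ))
    simpa [cum] using this
  have hb : cum f (Fintype.equivFin Y y) + f y ≤ 1 := by
    rw [← cum_succ y, ← cum_card hf1]
    exact cum_mono hf0 (Fintype.equivFin Y y).2
  rw [volume_val_Ico h0 hb]
  ring_nf

end Samp

/-! ### Haar measure on the infinite product of circles -/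

instance : IsProbabilityMeasure (volume : Measure C) := ⟨by simp⟩

noncomputable def nu : Measure (ℕ → C) :=
  Measure.addHaarMeasure (⊤ : TopologicalSpace.PositiveCompacts (ℕ → C))

instance : nu.IsAddLeftInvariant := by unfold nu; infer_instance

instance : IsProbabilityMeasure nu := by
  constructor
  rw [show (univ : Set (ℕ → C)) =
    ((⊤ : TopologicalSpace.PositiveCompacts (ℕ → C)) : Set (ℕ → C)) by simp]
  exact Measure.addHaarMeasure_self

def proj (m : ℕ) : (ℕ → C) →+ (Fin m → C) where
  toFun u := fun j => u j
  map_zero' := rfl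
  map_add' _ _ := rfl

lemma measurable_proj (m : ℕ) : Measurable (proj m) :=
  measurable_pi_lambda _ (fun j => measurable_pi_apply _)

lemma surjective_proj (m : ℕ) : Function.Surjective (proj m) := by
  intro v
  refine ⟨fun i => if h : i < m then v ⟨i, h⟩ else 0, ?_⟩
  funext j
  simp [proj, j.2]

lemma map_proj_nu (m : ℕ) :
    Measure.map (proj m) nu = Measure.pi (fun _ : Fin m => (volume : Measure C)) := by
  have h1 : IsProbabilityMeasure (Measure.map (proj m) nu) :=
    Measure.isProbabilityMeasure_map (measurable_proj m).aemeasurable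
  have h2 : (Measure.map (proj m) nu).IsAddLeftInvariant :=
    MeasureTheory.isAddLeftInvariant_map (μ := nu) (proj m).toAddHom
      (measurable_proj m) (surjective_proj m)
  have e1 := Measure.addHaarMeasure_unique (Measure.map (proj m) nu)
    (⊤ : TopologicalSpace.PositiveCompacts (Fin m → C))
  have e2 := Measure.addHaarMeasure_unique (Measure.pi (fun _ : Fin m => (volume : Measure C)))
    (⊤ : TopologicalSpace.PositiveCompacts (Fin m → C))
  rw [e1, e2]
  congr 1
  rw [show (((⊤ : TopologicalSpace.PositiveCompacts (Fin m → C))) : Set (Fin m → C)) = univ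
    by simp]
  rw [measure_univ, measure_univ]

lemma nu_cylinder (m : ℕ) (T : ℕ → Set C) (hT : ∀ j, MeasurableSet (T j)) :
    nu {u | ∀ j < m, u j ∈ T j} = ∏ j ∈ Finset.range m, volume (T j) := by
  have hset : {u : ℕ → C | ∀ j < m, u j ∈ T j} =
      (proj m) ⁻¹' (univ.pi (fun j : Fin m => T j)) := by
    ext u
    simp only [mem_setOf_eq, mem_preimage, mem_pi, mem_univ]
    constructor
    · intro h j _; exact h j j.2
    · intro h j hj; exact h ⟨j, hj⟩ trivial
  rw [hset, ← Measure.map_apply (measurable_proj m)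
    (MeasurableSet.univ_pi (fun j => hT j)), map_proj_nu m, Measure.pi_pi]
  rw [← Fin.prod_univ_eq_prod_range (fun j => volume (T j)) m]

/-! ### The Markov chain construction -/

variable {X : Type*} [Fintype X] [MeasurableSpace X] [MeasurableSingletonClass X] [Nonempty X]

variable (k : ℕ) (p : (Fin (k + 1) → X) → ℝ)

def tsum' (s : Fin k → X) : ℝ := ∑ β, p (Fin.snoc s β)

def trans (s : Fin k → X) (b : X) : ℝ :=
  if 0 < tsum' k p s then p (Fin.snoc s b) / tsum' k p s else (Fintype.card X : ℝ)⁻¹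

omit [MeasurableSpace X] [MeasurableSingletonClass X] [Nonempty X] in
lemma trans_nonneg (hp0 : ∀ w, 0 ≤ p w) (s : Fin k → X) (b : X) : 0 ≤ trans k p s b := by
  unfold trans
  split_ifs with h
  · exact div_nonneg (hp0 _) h.le
  · positivity

omit [MeasurableSpace X] [MeasurableSingletonClass X] in
lemma trans_sum_one (s : Fin k → X) : ∑ b, trans k p s b = 1 := by
  unfold trans
  split_ifs with h
  · rw [← Finset.sum_div]
    exact div_self (ne_of_gt h)
  · rw [Finset.sum_const, Finset.card_univ, nsmul_eq_mul]
    rw [mul_inv_cancel₀]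
    exact_mod_cast Fintype.card_ne_zero

noncomputable def seq (u : ℕ → C) : ℕ → X
  | i =>
    if h : i < k + 1 then samp p (u 0) ⟨i, h⟩
    else samp (trans k p (fun j : Fin k => seq u (i - k + j))) (u (i - k))
  decreasing_by
    have := j.2
    omega

omit [MeasurableSpace X] [MeasurableSingletonClass X] in
lemma seq_def (u : ℕ → C) (i : ℕ) :
    seq k p u i =
      if h : i < k + 1 then samp p (u 0) ⟨i, h⟩
      else samp (trans k p (fun j : Fin k => seq k p u (i - k + j))) (u (i - k)) := by
  rw [seq]

variable (hp0 : ∀ w, 0 ≤ p w) (hp1 : ∑ w, p w = 1)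

include hp0

lemma measurable_samp_comp {α : Type*} [MeasurableSpace α] {g : α → (Fin k → X)}
    (hg : Measurable g) {h : α → C} (hh : Measurable h) :
    Measurable (fun a => samp (trans k p (g a)) (h a)) := by
  apply measurable_to_countable'
  intro x
  have hid : (fun a => samp (trans k p (g a)) (h a)) ⁻¹' {x} =
      ⋃ s : Fin k → X, (g ⁻¹' {s} ∩ h ⁻¹' (samp (trans k p s) ⁻¹' {x})) := by
    ext a
    simp only [mem_preimage, mem_singleton_iff, mem_iUnion, mem_inter_iff]
    constructor
    · intro ha; exact ⟨g a, rfl, ha⟩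
    · rintro ⟨s, rfl, ha⟩; exact ha
  rw [hid]
  exact MeasurableSet.iUnion fun s =>
    (hg (measurableSet_singleton s)).inter
      (hh ((samp_measurable (trans_nonneg k p hp0 s) (trans_sum_one k p s))
        (measurableSet_singleton x)))

include hp1

lemma measurable_seq (i : ℕ) : Measurable (fun u : ℕ → C => seq k p u i) := by
  induction i using Nat.strong_induction_on with
  | _ i IH =>
    have hrw : (fun u : ℕ → C => seq k p u i) = fun u =>
        if h : i < k + 1 then samp p (u 0) ⟨i, h⟩
        else samp (trans k p (fun j : Fin k => seq k p u (i - k + j))) (u (i - k)) :=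
      funext fun u => seq_def k p u i
    rw [hrw]
    by_cases h : i < k + 1
    · simp only [dif_pos h]
      exact (measurable_pi_apply (⟨i, h⟩ : Fin (k+1))).comp
        ((samp_measurable hp0 hp1).comp (measurable_pi_apply 0))
    · simp only [dif_neg h]
      apply measurable_samp_comp k p hp0
      · exact measurable_pi_lambda _ fun j => IH (i - k + j) (by have := j.2; omega)
      · exact measurable_pi_apply (i - k)

noncomputable def seqFun : (ℕ → C) → (ℕ → X) := fun u i => seq k p u i

lemma measurable_seqFun : Measurable (seqFun k p) :=
  measurable_pi_lambda _ (measurable_seq k p hp0 hp1)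

omit hp0 hp1

/-- the per-coordinate target sets -/
def Sset (w : ℕ → X) (j : ℕ) : Set C :=
  if j = 0 then samp p ⁻¹' {fun i : Fin (k+1) => w i}
  else samp (trans k p (fun l : Fin k => w (j + l))) ⁻¹' {w (j + k)}

include hp0 hp1 in
lemma Sset_measurable (w : ℕ → X) (j : ℕ) : MeasurableSet (Sset k p w j) := by
  unfold Sset
  split_ifs with h
  · exact (samp_measurable hp0 hp1) (measurableSet_singleton _)
  · exact (samp_measurable (trans_nonneg k p hp0 _) (trans_sum_one k p _))
      (measurableSet_singleton _)

omit [MeasurableSpace X] [MeasurableSingletonClass X] in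
lemma event_eq (w : ℕ → X) (n : ℕ) :
    {u : ℕ → C | ∀ i < n + (k+1), seq k p u i = w i} =
      {u | ∀ j < n + 1, u j ∈ Sset k p w j} := by
  ext u
  simp only [mem_setOf_eq]
  constructor
  · intro h j hj
    unfold Sset
    split_ifs with hj0
    · subst hj0
      simp only [mem_preimage, mem_singleton_iff]
      funext i
      have hi : (i : ℕ) < n + (k+1) := by have := i.2; omega
      have hx := h i hi
      rw [seq_def, dif_pos i.2, Fin.eta] at hx
      exact hx
    · simp only [mem_preimage, mem_singleton_iff]
      have hjk : j + k < n + (k+1) := by omega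
      have hx := h (j + k) hjk
      rw [seq_def, dif_neg (by omega)] at hx
      have harith : j + k - k = j := by omega
      rw [harith] at hx
      have hst : (fun l : Fin k => seq k p u (j + l)) = fun l : Fin k => w (j + l) := by
        funext l
        exact h (j + l) (by have := l.2; omega)
      rwa [hst] at hx
  · intro h i
    induction i using Nat.strong_induction_on with
    | _ i IH =>
      intro hi
      rw [seq_def]
      split_ifs with hik
      · have h0 := h 0 (by omega)
        unfold Sset at h0
        rw [if_pos rfl] at h0
        simp only [mem_preimage, mem_singleton_iff] at h0
        calc samp p (u 0) ⟨i, hik⟩ = (fun i : Fin (k+1) => w i) ⟨i, hik⟩ := by rw [h0]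
          _ = w i := rfl
      · have hj : i - k < n + 1 := by omega
        have hj0 : i - k ≠ 0 := by omega
        have hSm := h (i - k) hj
        unfold Sset at hSm
        rw [if_neg hj0] at hSm
        simp only [mem_preimage, mem_singleton_iff] at hSm
        have hst : (fun l : Fin k => seq k p u (i - k + l)) =
            fun l : Fin k => w ((i - k) + l) := by
          funext l
          exact IH (i - k + l) (by have := l.2; omega) (by have := l.2; omega)
        rw [hst, hSm]
        congr 1
        omega

/-! ### The stationary measure -/

def cylN (n : ℕ) (w : ℕ → X) : Set (ℕ → X) := {ω | ∀ i < n, ω i = w i}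

omit [Fintype X] [Nonempty X] in
lemma cylN_measurable (n : ℕ) (w : ℕ → X) : MeasurableSet (cylN (X := X) n w) := by
  have : cylN (X := X) n w = ⋂ i ∈ Finset.range n, (fun ω : ℕ → X => ω i) ⁻¹' {w i} := by
    ext ω
    simp [cylN]
  rw [this]
  exact MeasurableSet.biInter (Finset.range n).countable_toSet
    (fun i _ => measurable_pi_apply i (measurableSet_singleton _))

noncomputable def mu : Measure (ℕ → X) := Measure.map (seqFun k p) nu

include hp0 hp1

lemma mu_prob : IsProbabilityMeasure (mu k p) :=
  Measure.isProbabilityMeasure_map (measurable_seqFun k p hp0 hp1).aemeasurable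

lemma mu_cyl (n : ℕ) (w : ℕ → X) :
    mu k p (cylN (n + (k+1)) w) = ∏ j ∈ Finset.range (n+1), volume (Sset k p w j) := by
  rw [mu, Measure.map_apply (measurable_seqFun k p hp0 hp1) (cylN_measurable _ _)]
  have hpre : seqFun k p ⁻¹' cylN (n + (k+1)) w =
      {u | ∀ i < n + (k+1), seq k p u i = w i} := rfl
  rw [hpre, event_eq, nu_cylinder _ _ (Sset_measurable k p hp0 hp1 w)]

lemma vol_S0 (w : ℕ → X) :
    volume (Sset k p w 0) = ENNReal.ofReal (p (fun i : Fin (k+1) => w i)) := by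
  unfold Sset
  rw [if_pos rfl]
  exact samp_volume hp0 hp1 _

omit hp1 in
lemma vol_Sj (w : ℕ → X) (j : ℕ) (hj : j ≠ 0) :
    volume (Sset k p w j) =
      ENNReal.ofReal (trans k p (fun l : Fin k => w (j + l)) (w (j + k))) := by
  unfold Sset
  rw [if_neg hj]
  exact samp_volume (trans_nonneg k p hp0 _) (trans_sum_one k p _) _

lemma mu_base (w : ℕ → X) :
    mu k p (cylN (k+1) w) = ENNReal.ofReal (p (fun i : Fin (k+1) => w i)) := by
  have h := mu_cyl k p hp0 hp1 0 w
  rw [show 0 + (k+1) = k + 1 by omega] at h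
  rw [h, Finset.prod_range_one, vol_S0 k p hp0 hp1]

lemma mu_consistent (n : ℕ) (w : ℕ → X) :
    mu k p (cylN n w) = ∑ x : X, mu k p (cylN (n+1) (Function.update w n x)) := by
  have hset : cylN (X := X) n w = ⋃ x : X, cylN (n+1) (Function.update w n x) := by
    ext ω
    simp only [mem_iUnion, cylN, mem_setOf_eq]
    constructor
    · intro h
      refine ⟨ω n, fun i hi => ?_⟩
      rcases Nat.lt_succ_iff_lt_or_eq.mp hi with h' | h'
      · rw [Function.update_of_ne (by omega), h i h']
      · subst h'; rw [Function.update_self]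
    · rintro ⟨x, hx⟩ i hi
      have := hx i (by omega)
      rwa [Function.update_of_ne (by omega)] at this
  have hdisj : Pairwise (Function.onFun Disjoint fun x : X => cylN (n+1) (Function.update w n x)) := by
    intro x y hxy
    simp only [Function.onFun]
    rw [Set.disjoint_left]
    intro ω hx hy
    apply hxy
    have h1 : ω n = x := by
      have := hx n (by omega); rwa [Function.update_self] at this
    have h2 : ω n = y := by
      have := hy n (by omega); rwa [Function.update_self] at this
    rw [← h1, ← h2]
  rw [hset, measure_iUnion hdisj (fun x => cylN_measurable _ _), tsum_fintype]

/-- prepend a letter -/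
def consN (β : X) (w : ℕ → X) : ℕ → X := fun i => Nat.casesOn i β (fun j => w j)

omit [MeasurableSpace X] [MeasurableSingletonClass X] hp0 hp1 in
lemma consN_apply_fin (β : X) (w : ℕ → X) :
    (fun i : Fin (k+1) => consN β w i) = Fin.cons β (fun l : Fin k => w l) := by
  funext i
  induction i using Fin.cases with
  | zero => simp [consN]
  | succ j => simp [consN, Fin.val_succ]

omit [MeasurableSpace X] [MeasurableSingletonClass X] [Nonempty X] hp0 hp1 in
lemma snoc_eq (w : ℕ → X) :
    (fun i : Fin (k+1) => w i) = Fin.snoc (fun l : Fin k => w l) (w k) := by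
  funext i
  induction i using Fin.lastCases with
  | last => simp
  | cast j => simp

omit [MeasurableSpace X] [MeasurableSingletonClass X] [Nonempty X] hp1 in
lemma trans_key
    (hst : ∀ xk : Fin k → X, ∑ β : X, p (Fin.cons β xk) = ∑ β : X, p (Fin.snoc xk β))
    (s : Fin k → X) (x : X) :
    (∑ β : X, p (Fin.cons β s)) * trans k p s x = p (Fin.snoc s x) := by
  rw [hst s]
  rw [show (∑ β : X, p (Fin.snoc s β)) = tsum' k p s from rfl]
  unfold trans
  split_ifs with h
  · field_simp
  · have h0 : tsum' k p s = 0 :=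
      le_antisymm (not_lt.mp h) (Finset.sum_nonneg fun β _ => hp0 _)
    have hx : p (Fin.snoc s x) = 0 := by
      refine le_antisymm ?_ (hp0 _)
      rw [← h0]
      exact Finset.single_le_sum (fun β _ => hp0 _) (Finset.mem_univ x)
    rw [h0, hx, zero_mul]

lemma mu_shift_long
    (hst : ∀ xk : Fin k → X, ∑ β : X, p (Fin.cons β xk) = ∑ β : X, p (Fin.snoc xk β))
    (n : ℕ) (w : ℕ → X) :
    ∑ β : X, mu k p (cylN ((n+1) + (k+1)) (consN β w)) = mu k p (cylN (n + (k+1)) w) := by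
  have hS2 : ∀ (β : X) (j : ℕ),
      volume (Sset k p (consN β w) (j+1+1)) = volume (Sset k p w (j+1)) := by
    intro β j
    unfold Sset
    rw [if_neg (by omega), if_neg (by omega)]
    have e1 : (fun l : Fin k => consN β w (j+1+1+l)) = fun l : Fin k => w (j+1+l) := by
      funext l
      have he : j+1+1+(l:ℕ) = (j+1+(l:ℕ)) + 1 := by omega
      rw [he]; rfl
    have e2 : consN β w (j+1+1+k) = w (j+1+k) := by
      have he : j+1+1+k = (j+1+k)+1 := by omega
      rw [he]; rfl
    rw [e1, e2]
  have hS1 : ∀ β : X, volume (Sset k p (consN β w) (0+1)) =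
      volume (samp (trans k p (fun l : Fin k => w l)) ⁻¹' {w k}) := by
    intro β
    unfold Sset
    rw [if_neg (by omega)]
    have e1 : (fun l : Fin k => consN β w (0+1+l)) = fun l : Fin k => w l := by
      funext l
      have he : 0+1+(l:ℕ) = (l:ℕ)+1 := by omega
      rw [he]; rfl
    have e2 : consN β w (0+1+k) = w k := by
      have he : 0+1+k = k+1 := by omega
      rw [he]; rfl
    rw [e1, e2]
  calc ∑ β : X, mu k p (cylN ((n+1) + (k+1)) (consN β w))
      = ∑ β : X, ((∏ j ∈ Finset.range n, volume (Sset k p w (j+1))) *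
          volume (samp (trans k p (fun l : Fin k => w l)) ⁻¹' {w k})) *
          volume (Sset k p (consN β w) 0) := by
        refine Finset.sum_congr rfl fun β _ => ?_
        rw [mu_cyl k p hp0 hp1 (n+1) (consN β w)]
        rw [Finset.prod_range_succ', Finset.prod_range_succ']
        rw [hS1 β]
        have hprod : (∏ j ∈ Finset.range n, volume (Sset k p (consN β w) (j+1+1))) =
            ∏ j ∈ Finset.range n, volume (Sset k p w (j+1)) :=
          Finset.prod_congr rfl fun j _ => hS2 β j
        rw [hprod]
    _ = ((∏ j ∈ Finset.range n, volume (Sset k p w (j+1))) *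
          volume (samp (trans k p (fun l : Fin k => w l)) ⁻¹' {w k})) *
          ∑ β : X, volume (Sset k p (consN β w) 0) := by
        rw [← Finset.mul_sum]
    _ = mu k p (cylN (n + (k+1)) w) := by
        rw [mu_cyl k p hp0 hp1 n w, Finset.prod_range_succ', mul_assoc]
        congr 1
        have hsum : ∑ β : X, volume (Sset k p (consN β w) 0) =
            ENNReal.ofReal (∑ β : X, p (Fin.cons β (fun l : Fin k => w l))) := by
          rw [ENNReal.ofReal_sum_of_nonneg (fun β _ => hp0 _)]
          refine Finset.sum_congr rfl fun β _ => ?_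
          rw [vol_S0 k p hp0 hp1 (consN β w), consN_apply_fin]
        rw [hsum, vol_S0 k p hp0 hp1 w,
          samp_volume (trans_nonneg k p hp0 _) (trans_sum_one k p _) (w k),
          ← ENNReal.ofReal_mul (trans_nonneg k p hp0 _ _)]
        congr 1
        rw [mul_comm, trans_key k p hp0 hst (fun l : Fin k => w l) (w k), snoc_eq k w]

lemma mu_shift_all
    (hst : ∀ xk : Fin k → X, ∑ β : X, p (Fin.cons β xk) = ∑ β : X, p (Fin.snoc xk β)) :
    ∀ (d n : ℕ), k + 1 ≤ n + d → ∀ w : ℕ → X,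
    ∑ β : X, mu k p (cylN (n+1) (consN β w)) = mu k p (cylN n w) := by
  intro d
  induction d with
  | zero =>
    intro n hn w
    obtain ⟨m, rfl⟩ : ∃ m, n = m + (k+1) := ⟨n - (k+1), by omega⟩
    have h := mu_shift_long k p hp0 hp1 hst m w
    rw [show m + (k+1) + 1 = (m+1) + (k+1) by omega]
    exact h
  | succ d IH =>
    intro n hn w
    have hupd : ∀ (β x : X),
        Function.update (consN β w) (n+1) x = consN β (Function.update w n x) := by
      intro β x
      funext i
      cases i with
      | zero => rw [Function.update_of_ne (by omega)]; rfl
      | succ i =>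
        by_cases hin : i = n
        · subst hin
          rw [show consN β (Function.update w i x) (i+1) = Function.update w i x i from rfl,
            Function.update_self, Function.update_self]
        · rw [Function.update_of_ne (by omega)]
          show consN β w (i+1) = Function.update w n x i
          rw [Function.update_of_ne hin]
          rfl
    calc ∑ β : X, mu k p (cylN (n+1) (consN β w))
        = ∑ β : X, ∑ x : X, mu k p (cylN (n+1+1) (Function.update (consN β w) (n+1) x)) := by
          exact Finset.sum_congr rfl fun β _ => mu_consistent k p hp0 hp1 (n+1) (consN β w)
      _ = ∑ x : X, ∑ β : X, mu k p (cylN (n+1+1) (consN β (Function.update w n x))) := by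
          rw [Finset.sum_comm]
          exact Finset.sum_congr rfl fun x _ =>
            Finset.sum_congr rfl fun β _ => by rw [hupd β x]
      _ = ∑ x : X, mu k p (cylN (n+1) (Function.update w n x)) := by
          exact Finset.sum_congr rfl fun x _ => IH (n+1) (by omega) (Function.update w n x)
      _ = mu k p (cylN n w) := (mu_consistent k p hp0 hp1 n w).symm

omit hp0 hp1

def cylFam : Set (Set (ℕ → X)) := {s | ∃ (n : ℕ) (w : ℕ → X), s = cylN n w}

omit [Fintype X] [MeasurableSpace X] [MeasurableSingletonClass X] [Nonempty X] in
lemma isPiSystem_cylFam : IsPiSystem (cylFam (X := X)) := by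
  rintro s ⟨n, w, rfl⟩ t ⟨m, v, rfl⟩ hne
  obtain ⟨ω, hω1, hω2⟩ := hne
  refine ⟨max n m, fun i => if i < n then w i else v i, ?_⟩
  ext ω'
  simp only [cylN, mem_inter_iff, mem_setOf_eq]
  constructor
  · rintro ⟨h1, h2⟩ i hi
    by_cases hin : i < n
    · rw [if_pos hin]; exact h1 i hin
    · rw [if_neg hin]
      exact h2 i (by omega)
  · intro h
    constructor
    · intro i hi
      have hh := h i (by omega)
      rwa [if_pos hi] at hh
    · intro i hi
      by_cases hin : i < n
      · have hh := h i (by omega)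
        rw [if_pos hin] at hh
        rw [hh, ← hω1 i hin]
        exact hω2 i hi
      · have hh := h i (by omega)
        rwa [if_neg hin] at hh

omit [Nonempty X] in
lemma generate_cylFam :
    MeasurableSpace.generateFrom (cylFam (X := X)) = MeasurableSpace.pi := by
  apply le_antisymm
  · rw [MeasurableSpace.generateFrom_le_iff]
    rintro s ⟨n, w, rfl⟩
    exact cylN_measurable n w
  · have hpi : (MeasurableSpace.pi : MeasurableSpace (ℕ → X)) =
        ⨆ i : ℕ, MeasurableSpace.comap (fun ω : ℕ → X => ω i) inferInstance := rfl
    rw [hpi]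
    apply iSup_le
    intro i
    rintro s ⟨A, hA, rfl⟩
    have hsingle : ∀ x : X, MeasurableSet[MeasurableSpace.generateFrom (cylFam (X := X))]
        ((fun ω : ℕ → X => ω i) ⁻¹' {x}) := by
      intro x
      have hid : (fun ω : ℕ → X => ω i) ⁻¹' {x} =
          ⋃ v : Fin i → X, cylN (i+1) (fun j => if h : j < i then v ⟨j, h⟩ else x) := by
        ext ω
        simp only [mem_preimage, mem_singleton_iff, mem_iUnion, cylN, mem_setOf_eq]
        constructor
        · intro h
          refine ⟨fun j => ω j, fun j hj => ?_⟩
          by_cases hji : j < i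
          · rw [dif_pos hji]
          · rw [dif_neg hji]
            have hje : j = i := by omega
            subst hje
            exact h
        · rintro ⟨v, hv⟩
          have hh := hv i (by omega)
          rwa [dif_neg (lt_irrefl i)] at hh
      rw [hid]
      exact MeasurableSet.iUnion fun v =>
        MeasurableSpace.measurableSet_generateFrom ⟨i+1, _, rfl⟩
    have hAid : (fun ω : ℕ → X => ω i) ⁻¹' A = ⋃ x ∈ A, (fun ω : ℕ → X => ω i) ⁻¹' {x} := by
      ext ω
      simp
    rw [hAid]
    exact MeasurableSet.biUnion A.to_countable fun x _ => hsingle x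

def shiftMap : (ℕ → X) → (ℕ → X) := fun ω i => ω (i+1)

omit [Fintype X] [MeasurableSingletonClass X] [Nonempty X] in
lemma measurable_shiftMap : Measurable (shiftMap (X := X)) :=
  measurable_pi_lambda _ fun i => measurable_pi_apply (i+1)

omit [Fintype X] [MeasurableSpace X] [MeasurableSingletonClass X] [Nonempty X] in
lemma shift_preimage (n : ℕ) (w : ℕ → X) :
    shiftMap ⁻¹' cylN n w = ⋃ β : X, cylN (n+1) (consN β w) := by
  ext ω
  simp only [shiftMap, cylN, mem_preimage, mem_setOf_eq, mem_iUnion]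
  constructor
  · intro h
    refine ⟨ω 0, fun i hi => ?_⟩
    cases i with
    | zero => rfl
    | succ i => exact h i (by omega)
  · rintro ⟨β, hβ⟩ i hi
    exact hβ (i+1) (by omega)

omit [Fintype X] [MeasurableSpace X] [MeasurableSingletonClass X] [Nonempty X] in
lemma consN_cyl_disjoint (n : ℕ) (w : ℕ → X) :
    Pairwise (Function.onFun Disjoint fun β : X => cylN (n+1) (consN β w)) := by
  intro x y hxy
  simp only [Function.onFun]
  rw [Set.disjoint_left]
  intro ω hx hy
  apply hxy
  have h1 : ω 0 = x := hx 0 (by omega)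
  have h2 : ω 0 = y := hy 0 (by omega)
  rw [← h1, ← h2]

include hp0 hp1 in
lemma mu_shift_invariant
    (hst : ∀ xk : Fin k → X, ∑ β : X, p (Fin.cons β xk) = ∑ β : X, p (Fin.snoc xk β)) :
    Measure.map (shiftMap (X := X)) (mu k p) = mu k p := by
  haveI := mu_prob k p hp0 hp1
  haveI : IsProbabilityMeasure (Measure.map (shiftMap (X := X)) (mu k p)) :=
    Measure.isProbabilityMeasure_map measurable_shiftMap.aemeasurable
  apply MeasureTheory.ext_of_generate_finite (cylFam (X := X))
    (generate_cylFam (X := X)).symm isPiSystem_cylFam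
  · rintro s ⟨n, w, rfl⟩
    rw [Measure.map_apply measurable_shiftMap (cylN_measurable n w), shift_preimage]
    rw [measure_iUnion (consN_cyl_disjoint n w) (fun β => cylN_measurable _ _), tsum_fintype]
    exact mu_shift_all k p hp0 hp1 hst (k+1) n (by omega) w
  · rw [measure_univ, measure_univ]

include hp0 hp1 in
lemma mu_marginal (w : Fin (k+1) → X) :
    mu k p {ω : ℕ → X | ∀ j : Fin (k+1), ω (j : ℕ) = w j} = ENNReal.ofReal (p w) := by
  classical
  set wN : ℕ → X := fun i => if h : i < k+1 then w ⟨i, h⟩ else w 0 with hwN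
  have hset : {ω : ℕ → X | ∀ j : Fin (k+1), ω (j : ℕ) = w j} = cylN (k+1) wN := by
    ext ω
    simp only [mem_setOf_eq, cylN]
    constructor
    · intro h i hi
      rw [hwN]
      simp only
      rw [dif_pos hi]
      exact h ⟨i, hi⟩
    · intro h j
      have hh := h j j.2
      rw [hwN] at hh
      simp only at hh
      rwa [dif_pos j.2, Fin.eta] at hh
  rw [hset, mu_base k p hp0 hp1 wN]
  congr 1
  congr 1
  funext i
  rw [hwN]
  simp only
  rw [dif_pos i.2, Fin.eta]

end StationaryAux


/-- A pmf `p` on `X^{k+1}` is the `(k+1)`-th order marginal of a stationary process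
(a shift-invariant probability measure on `X^ℕ`) if and only if it satisfies the
stationarity condition `∑_β p(β x^k) = ∑_β p(x^k β)` for all `x^k`. -/
theorem stationary_marginal_iff_stationarity_condition
    {X : Type*} [Fintype X] [MeasurableSpace X] [MeasurableSingletonClass X]
    (k : ℕ) (p : (Fin (k + 1) → X) → ℝ)
    (hp0 : ∀ w, 0 ≤ p w) (hp1 : ∑ w, p w = 1) :
    (∃ μ : Measure (ℕ → X), IsProbabilityMeasure μ ∧
        MeasurePreserving (fun ω (i : ℕ) => ω (i + 1)) μ μ ∧
        ∀ w : Fin (k + 1) → X,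
          p w = (μ {ω | ∀ j : Fin (k + 1), ω (j : ℕ) = w j}).toReal) ↔
    (∀ xk : Fin k → X, ∑ β : X, p (Fin.cons β xk) = ∑ β : X, p (Fin.snoc xk β)) := by
  constructor
  · rintro ⟨μ, hprob, hshift, hmarg⟩ xk
    have hmeasFin : ∀ {m : ℕ} (c : Fin m → X),
        MeasurableSet {ω : ℕ → X | ∀ j : Fin m, ω (j : ℕ) = c j} := by
      intro m c
      have hid : {ω : ℕ → X | ∀ j : Fin m, ω (j : ℕ) = c j} =
          ⋂ j : Fin m, (fun ω : ℕ → X => ω (j : ℕ)) ⁻¹' {c j} := by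
        ext ω; simp
      rw [hid]
      exact MeasurableSet.iInter fun j => measurable_pi_apply _ (measurableSet_singleton _)
    set A : X → Set (ℕ → X) :=
      fun β : X => {ω | ∀ j : Fin (k+1), ω (j : ℕ) = (Fin.cons β xk : Fin (k+1) → X) j} with hA
    set A' : X → Set (ℕ → X) :=
      fun β : X => {ω | ∀ j : Fin (k+1), ω (j : ℕ) = (Fin.snoc xk β : Fin (k+1) → X) j} with hA'
    set B : Set (ℕ → X) := {ω | ∀ j : Fin k, ω (j : ℕ) = xk j} with hB
    have hUA : ⋃ β, A β = (fun ω (i : ℕ) => ω (i + 1)) ⁻¹' B := by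
      ext ω
      simp only [hA, hB, mem_iUnion, mem_setOf_eq, mem_preimage]
      constructor
      · rintro ⟨β, h⟩ j
        have hh := h j.succ
        rwa [Fin.val_succ, Fin.cons_succ] at hh
      · intro h
        refine ⟨ω 0, fun j => ?_⟩
        induction j using Fin.cases with
        | zero => simp
        | succ i =>
          rw [Fin.val_succ, Fin.cons_succ]
          exact h i
    have hUA' : ⋃ β, A' β = B := by
      ext ω
      simp only [hA', hB, mem_iUnion, mem_setOf_eq]
      constructor
      · rintro ⟨β, h⟩ j
        have hh := h j.castSucc
        rwa [Fin.coe_castSucc, Fin.snoc_castSucc] at hh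
      · intro h
        refine ⟨ω k, fun j => ?_⟩
        induction j using Fin.lastCases with
        | last => rw [Fin.val_last, Fin.snoc_last]
        | cast i =>
          rw [Fin.coe_castSucc, Fin.snoc_castSucc]
          exact h i
    have hdA : Pairwise (Function.onFun Disjoint A) := by
      intro x y hxy
      simp only [Function.onFun, hA]
      rw [Set.disjoint_left]
      intro ω hx hy
      apply hxy
      have e1 : ω 0 = x := by simpa using hx (0 : Fin (k+1))
      have e2 : ω 0 = y := by simpa using hy (0 : Fin (k+1))
      rw [← e1, ← e2]
    have hdA' : Pairwise (Function.onFun Disjoint A') := by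
      intro x y hxy
      simp only [Function.onFun, hA']
      rw [Set.disjoint_left]
      intro ω hx hy
      apply hxy
      have e1 : ω k = x := by simpa using hx (Fin.last k)
      have e2 : ω k = y := by simpa using hy (Fin.last k)
      rw [← e1, ← e2]
    calc ∑ β : X, p (Fin.cons β xk)
        = ∑ β : X, (μ (A β)).toReal :=
          Finset.sum_congr rfl fun β _ => hmarg (Fin.cons β xk)
      _ = (∑ β : X, μ (A β)).toReal :=
          (ENNReal.toReal_sum (fun β _ => measure_ne_top μ _)).symm
      _ = (μ (⋃ β, A β)).toReal := by
          rw [measure_iUnion hdA (fun β => hmeasFin _), tsum_fintype]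
      _ = (μ B).toReal := by
          rw [hUA, hshift.measure_preimage (hmeasFin (m := k) xk).nullMeasurableSet]
      _ = (μ (⋃ β, A' β)).toReal := by rw [hUA']
      _ = (∑ β : X, μ (A' β)).toReal := by
          rw [measure_iUnion hdA' (fun β => hmeasFin _), tsum_fintype]
      _ = ∑ β : X, (μ (A' β)).toReal :=
          ENNReal.toReal_sum (fun β _ => measure_ne_top μ _)
      _ = ∑ β : X, p (Fin.snoc xk β) :=
          Finset.sum_congr rfl fun β _ => (hmarg _).symm
  · intro hst
    have hne : Nonempty X := by
      by_contra hX
      rw [not_nonempty_iff] at hX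
      haveI := hX
      haveI : IsEmpty (Fin (k+1) → X) := ⟨fun f => hX.false (f 0)⟩
      rw [Finset.univ_eq_empty, Finset.sum_empty] at hp1
      exact absurd hp1 zero_ne_one
    refine ⟨StationaryAux.mu k p, StationaryAux.mu_prob k p hp0 hp1, ?_, ?_⟩
    · exact ⟨StationaryAux.measurable_shiftMap,
        StationaryAux.mu_shift_invariant k p hp0 hp1 hst⟩
    · intro w
      rw [StationaryAux.mu_marginal k p hp0 hp1 w, ENNReal.toReal_ofReal (hp0 w)]
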